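/- Let k ≥ 1 and let a_1 ≥ a_2 ≥ ⋯ ≥ a_k ≥ 0 be real numbers with a_1 + ⋯ + a_k = 1. Then the quantity ∏_{i=1}^k 1/((1−a_i)^{1−a_i} · a_i^{2a_i}) is maximized exactly when a_i = 1/k for all i, with maximum value k^{k+1}/(k−1)^{k-1}. -/

import Mathlib

open Real Finset

noncomputable def gfun (x : ℝ) : ℝ := (1 - x) * Real.log (1 - x) + 2 * (x * Real.log x)

lemma gfun_cont : Continuous gfun := by
  have h1 : Continuous fun x : ℝ => (1 - x) * Real.log (1 - x) :=
    Real.continuous_mul_log.comp (continuous_const.sub continuous_id)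
  exact h1.add (continuous_const.mul Real.continuous_mul_log)

lemma gfun_hasDeriv {x : ℝ} (hx0 : 0 < x) (hx1 : x < 1) :
    HasDerivAt gfun (2 * Real.log x - Real.log (1 - x) + 1) x := by
  have h1 : HasDerivAt (fun y : ℝ => (1 - y) * Real.log (1 - y))
      ((Real.log (1 - x) + 1) * (0 - 1)) x :=
    (Real.hasDerivAt_mul_log (x := 1 - x) (by linarith)).comp x
      ((hasDerivAt_const x (1:ℝ)).sub (hasDerivAt_id x))
  have h2 : HasDerivAt (fun y : ℝ => 2 * (y * Real.log y)) (2 * (Real.log x + 1)) x :=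
    (Real.hasDerivAt_mul_log hx0.ne').const_mul 2
  have := h1.add h2
  exact this.congr_deriv (by ring)

lemma gfun_strictConvex : StrictConvexOn ℝ (Set.Icc (0:ℝ) 1) gfun := by
  apply strictConvexOn_of_deriv2_pos (convex_Icc 0 1) gfun_cont.continuousOn
  intro x hx
  rw [interior_Icc] at hx
  obtain ⟨hx0, hx1⟩ := hx
  have h1 : deriv gfun =ᶠ[nhds x] fun y => 2 * Real.log y - Real.log (1 - y) + 1 := by
    filter_upwards [Ioo_mem_nhds hx0 hx1] with y hy using (gfun_hasDeriv hy.1 hy.2).deriv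
  have h2 : HasDerivAt (fun y : ℝ => 2 * Real.log y - Real.log (1 - y) + 1)
      (2 * x⁻¹ + (1 - x)⁻¹) x := by
    have hl : HasDerivAt (fun y : ℝ => Real.log (1 - y)) ((1 - x)⁻¹ * (0 - 1)) x :=
      (Real.hasDerivAt_log (by linarith)).comp x
        ((hasDerivAt_const x (1:ℝ)).sub (hasDerivAt_id x))
    have := (((Real.hasDerivAt_log hx0.ne').const_mul 2).sub hl).add_const 1
    exact this.congr_deriv (by ring)
  have hd : deriv (deriv gfun) x = 2 * x⁻¹ + (1 - x)⁻¹ := by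
    rw [h1.deriv_eq, h2.deriv]
  simp only [Function.iterate_succ, Function.iterate_zero, Function.comp_apply, Function.id_def,
    id_eq]
  rw [hd]
  have : (0:ℝ) < 1 - x := by linarith
  positivity

lemma gfun_exp {x : ℝ} (hx0 : 0 ≤ x) (hx1 : x ≤ 1) :
    (1 - x) ^ (1 - x) * x ^ (2 * x) = Real.exp (gfun x) := by
  rcases eq_or_lt_of_le hx0 with h | h
  · simp [← h, gfun]
  rcases eq_or_lt_of_le hx1 with h1 | h1
  · simp [h1, gfun]
  rw [Real.rpow_def_of_pos (by linarith), Real.rpow_def_of_pos h, ← Real.exp_add]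
  simp only [gfun]
  congr 1
  ring

lemma key_exp (k : ℕ) (hk : 1 ≤ k) :
    Real.exp (-(k:ℝ) * gfun ((k:ℝ)⁻¹)) =
      (k : ℝ) ^ ((k : ℝ) + 1) / ((k : ℝ) - 1) ^ ((k : ℝ) - 1) := by
  rcases eq_or_lt_of_le hk with h1 | h2
  · rw [← h1]
    norm_num [gfun]
  · have hK : (2:ℝ) ≤ (k:ℝ) := by exact_mod_cast h2
    set K := (k:ℝ) with hKdef
    have hK1 : (0:ℝ) < K - 1 := by linarith
    have hK0 : (0:ℝ) < K := by linarith
    rw [Real.rpow_def_of_pos hK0, Real.rpow_def_of_pos hK1, ← Real.exp_sub, Real.exp_eq_exp]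
    have e1 : (1:ℝ) - K⁻¹ = (K - 1)/K := by field_simp
    simp only [gfun]
    rw [e1, Real.log_div (by linarith) (by linarith), Real.log_inv]
    field_simp
    ring




open Real in
/-- For `k ≥ 1` and reals `a_1 ≥ a_2 ≥ ⋯ ≥ a_k ≥ 0` with `∑ a_i = 1`, the quantity
`∏ 1/((1−a_i)^(1−a_i) · a_i^(2a_i))` (real powers, convention `0^0 = 1`) is at most
`k^(k+1)/(k−1)^(k−1)`, with equality exactly when every `a_i = 1/k`. -/
theorem prod_max_increasing (k : ℕ) (hk : 1 ≤ k) (a : Fin k → ℝ)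
    (hdec : ∀ i j : Fin k, i ≤ j → a j ≤ a i) (h0 : ∀ i, 0 ≤ a i)
    (hsum : ∑ i, a i = 1) :
    (∏ i, 1 / ((1 - a i) ^ (1 - a i) * a i ^ (2 * a i))) ≤
      (k : ℝ) ^ ((k : ℝ) + 1) / ((k : ℝ) - 1) ^ ((k : ℝ) - 1) ∧
    ((∏ i, 1 / ((1 - a i) ^ (1 - a i) * a i ^ (2 * a i))) =
        (k : ℝ) ^ ((k : ℝ) + 1) / ((k : ℝ) - 1) ^ ((k : ℝ) - 1) ↔
      ∀ i, a i = 1 / (k : ℝ)) := by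
  have hk0 : (0:ℝ) < (k:ℝ) := by exact_mod_cast hk
  have hmem : ∀ i : Fin k, a i ∈ Set.Icc (0:ℝ) 1 := by
    intro i
    refine ⟨h0 i, ?_⟩
    calc a i ≤ ∑ j, a j := Finset.single_le_sum (fun j _ => h0 j) (Finset.mem_univ i)
    _ = 1 := hsum
  -- rewrite the product
  have hprod : (∏ i, 1 / ((1 - a i) ^ (1 - a i) * a i ^ (2 * a i)))
      = Real.exp (-∑ i, gfun (a i)) := by
    have : ∀ i : Fin k, 1 / ((1 - a i) ^ (1 - a i) * a i ^ (2 * a i))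
        = Real.exp (-(gfun (a i))) := by
      intro i
      rw [gfun_exp (hmem i).1 (hmem i).2, Real.exp_neg, one_div]
    rw [Finset.prod_congr rfl fun i _ => this i, ← Real.exp_sum, Finset.sum_neg_distrib]
  -- weights
  set w : Fin k → ℝ := fun _ => (k:ℝ)⁻¹ with hw
  have hwsum : ∑ i : Fin k, w i = 1 := by
    simp [hw, Finset.card_univ]
    field_simp
  have hmean : ∑ i : Fin k, w i • a i = (k:ℝ)⁻¹ := by
    simp only [hw, smul_eq_mul, ← Finset.mul_sum, hsum, mul_one]
  have hJ : gfun ((k:ℝ)⁻¹) ≤ (k:ℝ)⁻¹ * ∑ i, gfun (a i) := by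
    have := gfun_strictConvex.convexOn.map_sum_le (t := Finset.univ)
      (fun i _ => by positivity) hwsum (fun i _ => hmem i)
    rw [hmean] at this
    simpa [hw, smul_eq_mul, Finset.mul_sum] using this
  have hkey : (k : ℝ) ^ ((k : ℝ) + 1) / ((k : ℝ) - 1) ^ ((k : ℝ) - 1)
      = Real.exp (-(k:ℝ) * gfun ((k:ℝ)⁻¹)) := (key_exp k hk).symm
  have hineq : -∑ i, gfun (a i) ≤ -(k:ℝ) * gfun ((k:ℝ)⁻¹) := by
    have := mul_le_mul_of_nonneg_left hJ hk0.le
    rw [← mul_assoc, mul_inv_cancel₀ hk0.ne', one_mul] at this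
    linarith
  constructor
  · rw [hprod, hkey]
    exact Real.exp_le_exp.mpr hineq
  · rw [hprod, hkey, Real.exp_eq_exp]
    constructor
    · intro h
      have heq : ∑ i, w i • gfun (a i) ≤ gfun (∑ i : Fin k, w i • a i) := by
        rw [hmean]
        have h' : ∑ i, gfun (a i) = (k:ℝ) * gfun ((k:ℝ)⁻¹) := by linarith [h]
        simp only [hw, smul_eq_mul, ← Finset.mul_sum, h']
        rw [← mul_assoc, inv_mul_cancel₀ hk0.ne', one_mul]
      have hall := gfun_strictConvex.eq_of_le_map_sum (t := Finset.univ)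
        (fun i _ => by positivity) hwsum (fun i _ => hmem i) heq
      intro i
      have : ∑ j : Fin k, a j = (k:ℝ) * a i := by
        rw [Finset.sum_congr rfl fun j _ => hall (Finset.mem_univ j) (Finset.mem_univ i)]
        simp [Finset.card_univ, mul_comm]
      rw [hsum] at this
      field_simp
      linarith [this]
    · intro h
      have : ∀ i : Fin k, gfun (a i) = gfun ((k:ℝ)⁻¹) := by
        intro i; rw [h i, one_div]
      rw [Finset.sum_congr rfl fun i _ => this i]
      simp [Finset.card_univ]
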